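/- Let R : X → PMF Y on finite types, fix x₁ ∈ X, and let M = max_y Pr[R(x₁)=y] / (min_{x∈X} Pr[R(x)=y]) (assume the denominator is positive for all y). Then for every n ≥ 1 and every input vector with first coordinate x₁, every adversary in the shuffle re-identification game succeeds with probability at most M/n. -/

import Mathlib

open scoped Classical BigOperators

/-- Success probability of adversary `A` in the shuffle re-identification game:
each user `i` samples `y i` from distribution `Pvec i`, a uniformly random
permutation `σ` is applied, the adversary sees the shuffled vector and wins if
it outputs `σ⁻¹ 0` (the shuffled position of user 0, the target). -/
noncomputable def shuffleSuccess {Y : Type*} [Fintype Y] (n : ℕ) [NeZero n]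
    (Pvec : Fin n → Y → ℝ) (A : (Fin n → Y) → Fin n) : ℝ :=
  (Nat.factorial n : ℝ)⁻¹ *
    ∑ σ : Equiv.Perm (Fin n), ∑ y : Fin n → Y,
      (∏ i, Pvec i (y i)) * (if A (fun i => y (σ i)) = σ.symm 0 then 1 else 0)

/-- The "blanket" sub-probability measure attached to a subset `S` of positions:
positions in `S` draw from the blanket `q`, other positions from the leftover
distributions `r` of the users assigned there by `σ`. -/
noncomputable def stmtMu {Y : Type*} [Fintype Y] (n : ℕ) (q : Y → ℝ) (r : Fin n → Y → ℝ)
    (S : Finset (Fin n)) (σ : Equiv.Perm (Fin n)) (z : Fin n → Y) : ℝ :=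
  ∏ j, (if j ∈ S then q (z j) else r (σ j) (z j))

noncomputable def stmtG {Y : Type*} [Fintype Y] (n : ℕ) [NeZero n] (q : Y → ℝ)
    (r : Fin n → Y → ℝ) (A : (Fin n → Y) → Fin n) (S : Finset (Fin n))
    (σ : Equiv.Perm (Fin n)) : ℝ :=
  ∑ z : Fin n → Y, (if A z = σ.symm 0 then (1:ℝ) else 0) * stmtMu n q r S σ z

lemma stmt17_count (n : ℕ) [NeZero n] (b₀ : Fin n) :
    ((Finset.univ.filter (fun σ : Equiv.Perm (Fin n) => σ.symm 0 = b₀)).card)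
      = (n-1).factorial := by
  classical
  have hiff : ∀ σ : Equiv.Perm (Fin n), (σ.symm 0 = b₀ ↔ σ b₀ = 0) := by
    intro σ
    constructor <;> intro h
    · rw [← h, Equiv.apply_symm_apply]
    · rw [← h, Equiv.symm_apply_apply]
  have hfilter : (Finset.univ.filter (fun σ : Equiv.Perm (Fin n) => σ.symm 0 = b₀))
      = Finset.univ.filter (fun σ : Equiv.Perm (Fin n) => σ b₀ = 0) :=
    Finset.filter_congr fun σ _ => hiff σ
  rw [hfilter]
  have hfib : ∀ c : Fin n,
      (Finset.univ.filter (fun σ : Equiv.Perm (Fin n) => σ b₀ = c)).card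
        = (Finset.univ.filter (fun σ : Equiv.Perm (Fin n) => σ b₀ = 0)).card := by
    intro c
    apply Finset.card_nbij' (i := fun σ => Equiv.swap c 0 * σ) (j := fun σ => Equiv.swap c 0 * σ)
    · intro σ hσ
      simp only [Finset.mem_coe, Finset.mem_filter, Finset.mem_univ, true_and] at hσ ⊢
      rw [Equiv.Perm.mul_apply, hσ, Equiv.swap_apply_left]
    · intro σ hσ
      simp only [Finset.mem_coe, Finset.mem_filter, Finset.mem_univ, true_and] at hσ ⊢
      rw [Equiv.Perm.mul_apply, hσ, Equiv.swap_apply_right]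
    · intro σ _
      beta_reduce
      rw [← mul_assoc, Equiv.swap_mul_self, one_mul]
    · intro σ _
      beta_reduce
      rw [← mul_assoc, Equiv.swap_mul_self, one_mul]
  have htot : (Finset.univ : Finset (Equiv.Perm (Fin n))).card
      = ∑ c : Fin n, (Finset.univ.filter (fun σ : Equiv.Perm (Fin n) => σ b₀ = c)).card :=
    Finset.card_eq_sum_card_fiberwise (fun σ _ => Finset.mem_univ _)
  rw [Finset.card_univ, Fintype.card_perm, Fintype.card_fin] at htot
  rw [Finset.sum_congr rfl (fun c _ => hfib c), Finset.sum_const, Finset.card_univ,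
    Fintype.card_fin, smul_eq_mul] at htot
  have hne : 0 < n := Nat.pos_of_ne_zero (NeZero.ne n)
  have hfacn : n.factorial = n * (n-1).factorial := by
    obtain ⟨m, rfl⟩ : ∃ m, n = m + 1 := ⟨n - 1, by omega⟩
    simp [Nat.factorial_succ]
  rw [hfacn] at htot
  exact Nat.eq_of_mul_eq_mul_left hne htot.symm

lemma stmt17_perm {Y : Type*} [Fintype Y] [Nonempty Y] (n : ℕ) [NeZero n]
    (P : Fin n → Y → ℝ) (q : Y → ℝ) (M : ℝ) (r : Fin n → Y → ℝ)
    (hr : ∀ i y, r i y = P i y - q y)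
    (hP0 : ∀ i y, 0 ≤ P i y)
    (hq0 : ∀ y, 0 ≤ q y)
    (hM : ∀ y, P 0 y ≤ M * q y) (hM0 : 0 ≤ M)
    (A : (Fin n → Y) → Fin n)
    (hμ_split : ∀ S σ z, stmtMu n q r S σ z
      = (∏ j ∈ S, q (z j)) * ∏ j ∈ Sᶜ, r (σ j) (z j))
    (σ : Equiv.Perm (Fin n)) :
    (∑ z : Fin n → Y, (∏ j, P (σ j) (z j)) * (if A z = σ.symm 0 then (1:ℝ) else 0))
      ≤ M * ∑ S : Finset (Fin n), (if σ.symm 0 ∈ S then stmtG n q r A S σ else 0) := by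
  classical
  set a := σ.symm 0 with ha_def
  have hσa : σ a = 0 := Equiv.apply_symm_apply σ 0
  have hind0 : ∀ (z : Fin n → Y) (b : Fin n), 0 ≤ (if A z = b then (1:ℝ) else 0) := by
    intro z b; split <;> norm_num
  have step1 : ∀ z : Fin n → Y, (∏ j, P (σ j) (z j)) * (if A z = a then (1:ℝ) else 0)
      ≤ M * ((if A z = a then (1:ℝ) else 0)
          * (q (z a) * ∏ j ∈ Finset.univ.erase a, P (σ j) (z j))) := by
    intro z
    have hp : (∏ j, P (σ j) (z j))
        = P 0 (z a) * ∏ j ∈ Finset.univ.erase a, P (σ j) (z j) := by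
      rw [← Finset.mul_prod_erase Finset.univ (fun j => P (σ j) (z j)) (Finset.mem_univ a), hσa]
    rw [hp]
    have h2 : P 0 (z a) * ∏ j ∈ Finset.univ.erase a, P (σ j) (z j)
        ≤ (M * q (z a)) * ∏ j ∈ Finset.univ.erase a, P (σ j) (z j) :=
      mul_le_mul_of_nonneg_right (hM _) (Finset.prod_nonneg fun j _ => hP0 _ _)
    calc P 0 (z a) * (∏ j ∈ Finset.univ.erase a, P (σ j) (z j)) * (if A z = a then (1:ℝ) else 0)
        ≤ ((M * q (z a)) * ∏ j ∈ Finset.univ.erase a, P (σ j) (z j))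
            * (if A z = a then (1:ℝ) else 0) :=
          mul_le_mul_of_nonneg_right h2 (hind0 z a)
      _ = M * ((if A z = a then (1:ℝ) else 0)
            * (q (z a) * ∏ j ∈ Finset.univ.erase a, P (σ j) (z j))) := by ring
  have step2 : ∀ z : Fin n → Y, q (z a) * ∏ j ∈ Finset.univ.erase a, P (σ j) (z j)
      = ∑ S : Finset (Fin n), (if a ∈ S then stmtMu n q r S σ z else 0) := by
    intro z
    have hexp : (∏ j ∈ Finset.univ.erase a, P (σ j) (z j))
        = ∑ t ∈ (Finset.univ.erase a).powerset,
            (∏ j ∈ t, q (z j)) * ∏ j ∈ (Finset.univ.erase a) \ t, r (σ j) (z j) := by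
      rw [← Finset.prod_add]
      exact Finset.prod_congr rfl fun j _ => by rw [hr]; ring
    rw [hexp, Finset.mul_sum,
      show (∑ S : Finset (Fin n), (if a ∈ S then stmtMu n q r S σ z else 0))
        = ∑ S ∈ Finset.univ.filter (fun S : Finset (Fin n) => a ∈ S), stmtMu n q r S σ z
        from (Finset.sum_filter _ _).symm]
    apply Finset.sum_nbij' (i := fun t => insert a t) (j := fun S => S.erase a)
    · intro t ht
      simp
    · intro S hS
      simp only [Finset.mem_filter, Finset.mem_univ, true_and] at hS
      simp only [Finset.mem_powerset]
      exact Finset.erase_subset_erase a (Finset.subset_univ S)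
    · intro t ht
      simp only [Finset.mem_powerset] at ht
      exact Finset.erase_insert (fun hat => (Finset.mem_erase.mp (ht hat)).1 rfl)
    · intro S hS
      simp only [Finset.mem_filter, Finset.mem_univ, true_and] at hS
      exact Finset.insert_erase hS
    · intro t ht
      simp only [Finset.mem_powerset] at ht
      have hat : a ∉ t := fun hat => (Finset.mem_erase.mp (ht hat)).1 rfl
      rw [hμ_split, Finset.prod_insert hat]
      have hcompl : (insert a t)ᶜ = (Finset.univ.erase a) \ t := by
        ext j
        simp only [Finset.mem_compl, Finset.mem_insert, Finset.mem_sdiff, Finset.mem_erase,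
          Finset.mem_univ, and_true, true_and]
        tauto
      rw [hcompl]
      ring
  calc (∑ z : Fin n → Y, (∏ j, P (σ j) (z j)) * (if A z = a then (1:ℝ) else 0))
      ≤ ∑ z : Fin n → Y, M * ((if A z = a then (1:ℝ) else 0)
          * (q (z a) * ∏ j ∈ Finset.univ.erase a, P (σ j) (z j))) :=
        Finset.sum_le_sum fun z _ => step1 z
    _ = M * ∑ z : Fin n → Y, (if A z = a then (1:ℝ) else 0)
          * ∑ S : Finset (Fin n), (if a ∈ S then stmtMu n q r S σ z else 0) := by
        rw [← Finset.mul_sum]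
        congr 1
        exact Finset.sum_congr rfl fun z _ => by rw [step2 z]
    _ = M * ∑ S : Finset (Fin n), (if a ∈ S then stmtG n q r A S σ else 0) := by
        congr 1
        simp_rw [Finset.mul_sum, mul_ite, mul_zero]
        rw [Finset.sum_comm]
        apply Finset.sum_congr rfl
        intro S _
        split
        · rfl
        · exact Finset.sum_const_zero

lemma stmt17_key5 {Y : Type*} [Fintype Y] [Nonempty Y] (n : ℕ) [NeZero n]
    (q : Y → ℝ) (r : Fin n → Y → ℝ) (α : ℝ)
    (hα0 : 0 ≤ α) (hα1 : α ≤ 1)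
    (A : (Fin n → Y) → Fin n)
    (hμ0 : ∀ S σ z, 0 ≤ stmtMu n q r S σ z)
    (hμ_sum : ∀ S (σ : Equiv.Perm (Fin n)), ∑ z : Fin n → Y, stmtMu n q r S σ z
      = α ^ S.card * (1-α) ^ (n - S.card))
    (hcount : ∀ b₀ : Fin n,
      ((Finset.univ.filter (fun σ : Equiv.Perm (Fin n) => σ.symm 0 = b₀)).card)
        = (n-1).factorial)
    (S : Finset (Fin n)) :
    (∑ σ : Equiv.Perm (Fin n), if σ.symm 0 ∈ S then stmtG n q r A S σ else 0)
      ≤ ((n-1).factorial : ℝ) * (α ^ S.card * (1-α) ^ (n - S.card)) := by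
  classical
  have hpow0 : 0 ≤ α ^ S.card * (1-α) ^ (n - S.card) :=
    mul_nonneg (pow_nonneg hα0 _) (pow_nonneg (by linarith) _)
  rcases S.eq_empty_or_nonempty with rfl | ⟨b₀, hb₀⟩
  · simp only [Finset.notMem_empty, if_false, Finset.sum_const_zero]
    positivity
  · -- step a : regroup by the value of σ.symm 0
    have ha : (∑ σ : Equiv.Perm (Fin n), if σ.symm 0 ∈ S then stmtG n q r A S σ else 0)
        = ∑ b ∈ S, ∑ σ : Equiv.Perm (Fin n), if σ.symm 0 = b then stmtG n q r A S σ else 0 := by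
      rw [Finset.sum_comm]
      apply Finset.sum_congr rfl
      intro σ _
      rw [Finset.sum_ite_eq S (σ.symm 0) (fun _ => stmtG n q r A S σ)]
    rw [ha]
    have hW : ∀ (b : Fin n), b ∈ S → ∀ z : Fin n → Y,
        (∑ σ : Equiv.Perm (Fin n), if σ.symm 0 = b then stmtMu n q r S σ z else 0)
        = ∑ σ : Equiv.Perm (Fin n), if σ.symm 0 = b₀ then stmtMu n q r S σ z else 0 := by
      intro b hb z
      apply Fintype.sum_equiv (Equiv.mulRight (Equiv.swap b b₀))
      intro σ
      have hmr : (Equiv.mulRight (Equiv.swap b b₀)) σ = σ * Equiv.swap b b₀ := rfl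
      have hsymm : (σ * Equiv.swap b b₀).symm 0 = Equiv.swap b b₀ (σ.symm 0) := by
        rw [Equiv.Perm.mul_def, Equiv.symm_trans_apply, Equiv.symm_swap]
      by_cases h : σ.symm 0 = b
      · have hcond : (σ * Equiv.swap b b₀).symm 0 = b₀ := by
          rw [hsymm, h, Equiv.swap_apply_left]
        rw [if_pos h, hmr, if_pos hcond]
        rw [stmtMu, stmtMu]
        apply Finset.prod_congr rfl
        intro j _
        by_cases hj : j ∈ S
        · rw [if_pos hj, if_pos hj]
        · rw [if_neg hj, if_neg hj]
          have hjb : j ≠ b := fun hjb => hj (hjb ▸ hb)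
          have hjb₀ : j ≠ b₀ := fun hjb => hj (hjb ▸ hb₀)
          rw [Equiv.Perm.mul_apply, Equiv.swap_apply_of_ne_of_ne hjb hjb₀]
      · have hcond : ¬ (σ * Equiv.swap b b₀).symm 0 = b₀ := by
          rw [hsymm]
          intro hc
          apply h
          have h2 := congrArg (Equiv.swap b b₀) hc
          rwa [Equiv.swap_apply_self, Equiv.swap_apply_right] at h2
        rw [if_neg h, hmr, if_neg hcond]
    have hbij : ∀ b ∈ S, (∑ σ : Equiv.Perm (Fin n), if σ.symm 0 = b then stmtG n q r A S σ else 0)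
        = ∑ z : Fin n → Y, (if A z = b then (1:ℝ) else 0)
            * ∑ σ : Equiv.Perm (Fin n), (if σ.symm 0 = b₀ then stmtMu n q r S σ z else 0) := by
      intro b hb
      have h1 : (∑ σ : Equiv.Perm (Fin n), if σ.symm 0 = b then stmtG n q r A S σ else 0)
          = ∑ σ : Equiv.Perm (Fin n), ∑ z : Fin n → Y,
              (if σ.symm 0 = b then (if A z = b then (1:ℝ) else 0) * stmtMu n q r S σ z else 0) := by
        apply Finset.sum_congr rfl
        intro σ _
        by_cases h : σ.symm 0 = b
        · rw [if_pos h, stmtG, h]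
          exact Finset.sum_congr rfl fun z _ => (if_pos rfl).symm
        · rw [if_neg h]
          simp [h]
      rw [h1, Finset.sum_comm]
      apply Finset.sum_congr rfl
      intro z _
      have h2 : ∀ σ : Equiv.Perm (Fin n),
          (if σ.symm 0 = b then (if A z = b then (1:ℝ) else 0) * stmtMu n q r S σ z else 0)
          = (if A z = b then (1:ℝ) else 0) * (if σ.symm 0 = b then stmtMu n q r S σ z else 0) := by
        intro σ
        by_cases hh : σ.symm 0 = b <;> simp [hh]
      rw [Finset.sum_congr rfl fun σ _ => h2 σ, ← Finset.mul_sum, hW b hb z]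
    -- put it together
    have hW0 : ∀ z : Fin n → Y,
        0 ≤ ∑ σ : Equiv.Perm (Fin n), (if σ.symm 0 = b₀ then stmtMu n q r S σ z else 0) := by
      intro z
      apply Finset.sum_nonneg
      intro σ _
      split
      · exact hμ0 S σ z
      · exact le_refl (0:ℝ)
    calc (∑ b ∈ S, ∑ σ : Equiv.Perm (Fin n), if σ.symm 0 = b then stmtG n q r A S σ else 0)
        = ∑ b ∈ S, ∑ z : Fin n → Y, (if A z = b then (1:ℝ) else 0)
            * ∑ σ : Equiv.Perm (Fin n), (if σ.symm 0 = b₀ then stmtMu n q r S σ z else 0) :=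
          Finset.sum_congr rfl hbij
      _ = ∑ z : Fin n → Y, (∑ b ∈ S, if A z = b then (1:ℝ) else 0)
            * ∑ σ : Equiv.Perm (Fin n), (if σ.symm 0 = b₀ then stmtMu n q r S σ z else 0) := by
          rw [Finset.sum_comm]
          exact Finset.sum_congr rfl fun z _ => (Finset.sum_mul _ _ _).symm
      _ ≤ ∑ z : Fin n → Y, 1
            * ∑ σ : Equiv.Perm (Fin n), (if σ.symm 0 = b₀ then stmtMu n q r S σ z else 0) := by
          apply Finset.sum_le_sum
          intro z _
          apply mul_le_mul_of_nonneg_right _ (hW0 z)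
          calc (∑ b ∈ S, if A z = b then (1:ℝ) else 0)
              ≤ ∑ b : Fin n, if A z = b then (1:ℝ) else 0 :=
                Finset.sum_le_sum_of_subset_of_nonneg (Finset.subset_univ S)
                  (fun b _ _ => by split <;> norm_num)
            _ = 1 := by rw [Finset.sum_ite_eq]; simp
      _ = ∑ σ : Equiv.Perm (Fin n),
            (if σ.symm 0 = b₀ then ∑ z : Fin n → Y, stmtMu n q r S σ z else 0) := by
          simp_rw [one_mul]
          rw [Finset.sum_comm]
          apply Finset.sum_congr rfl
          intro σ _
          by_cases h : σ.symm 0 = b₀ <;> simp [h]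
      _ = ∑ σ : Equiv.Perm (Fin n),
            (if σ.symm 0 = b₀ then α ^ S.card * (1-α) ^ (n - S.card) else 0) := by
          apply Finset.sum_congr rfl
          intro σ _
          by_cases h : σ.symm 0 = b₀ <;> simp [h, hμ_sum S σ]
      _ = (((Finset.univ.filter (fun σ : Equiv.Perm (Fin n) => σ.symm 0 = b₀)).card : ℝ))
            * (α ^ S.card * (1-α) ^ (n - S.card)) := by
          rw [← Finset.sum_filter, Finset.sum_const, nsmul_eq_mul]
      _ = ((n-1).factorial : ℝ) * (α ^ S.card * (1-α) ^ (n - S.card)) := by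
          rw [hcount b₀]

lemma stmt17_aux {Y : Type*} [Fintype Y] [Nonempty Y] (n : ℕ) [NeZero n]
    (P : Fin n → Y → ℝ) (q : Y → ℝ) (M : ℝ)
    (hP0 : ∀ i y, 0 ≤ P i y) (hP1 : ∀ i, ∑ y, P i y = 1)
    (hq0 : ∀ y, 0 ≤ q y) (hqle : ∀ i y, q y ≤ P i y)
    (hM : ∀ y, P 0 y ≤ M * q y) (hM0 : 0 ≤ M)
    (A : (Fin n → Y) → Fin n) :
    shuffleSuccess n P A ≤ M / n := by
  classical
  set α : ℝ := ∑ y, q y with hα_def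
  set r : Fin n → Y → ℝ := fun i y => P i y - q y with hr_def
  have hr : ∀ i y, r i y = P i y - q y := fun i y => rfl
  have hα0 : 0 ≤ α := Finset.sum_nonneg fun y _ => hq0 y
  have hα1 : α ≤ 1 := by
    rw [hα_def, ← hP1 0]; exact Finset.sum_le_sum fun y _ => hqle 0 y
  have hr0 : ∀ i y, 0 ≤ r i y := fun i y => sub_nonneg.mpr (hqle i y)
  have hrsum : ∀ i, ∑ y, r i y = 1 - α := by
    intro i; simp only [hr_def]
    rw [Finset.sum_sub_distrib, hP1 i, ← hα_def]
  have hμ0 : ∀ S σ z, 0 ≤ stmtMu n q r S σ z := by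
    intro S σ z
    exact Finset.prod_nonneg fun j _ => by split <;> [exact hq0 _; exact hr0 _ _]
  have hμ_split : ∀ S σ z, stmtMu n q r S σ z
      = (∏ j ∈ S, q (z j)) * ∏ j ∈ Sᶜ, r (σ j) (z j) := by
    intro S σ z
    rw [stmtMu, Finset.prod_ite]
    have h1 : Finset.univ.filter (fun j => j ∈ S) = S := by ext j; simp
    have h2 : Finset.univ.filter (fun j => ¬ j ∈ S) = Sᶜ := by ext j; simp
    rw [h1, h2]
  have hμ_sum : ∀ S (σ : Equiv.Perm (Fin n)), ∑ z : Fin n → Y, stmtMu n q r S σ z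
      = α ^ S.card * (1-α) ^ (n - S.card) := by
    intro S σ
    have h1 : (∏ j : Fin n, ∑ y : Y, (if j ∈ S then q y else r (σ j) y))
        = ∑ z : Fin n → Y, stmtMu n q r S σ z := by
      rw [Finset.prod_univ_sum, Fintype.piFinset_univ]
      exact Finset.sum_congr rfl fun z _ => rfl
    rw [← h1]
    have h2 : ∀ j : Fin n, (∑ y : Y, (if j ∈ S then q y else r (σ j) y))
        = if j ∈ S then α else 1 - α := by
      intro j
      by_cases hj : j ∈ S <;> simp [hj, hα_def, hrsum]
    rw [Finset.prod_congr rfl fun j _ => h2 j, Finset.prod_ite]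
    have h3 : Finset.univ.filter (fun j : Fin n => j ∈ S) = S := by ext j; simp
    have h4 : Finset.univ.filter (fun j : Fin n => ¬ j ∈ S) = Sᶜ := by ext j; simp
    rw [h3, h4, Finset.prod_const, Finset.prod_const, Finset.card_compl, Fintype.card_fin]
  have key1 : ∀ σ : Equiv.Perm (Fin n),
      (∑ y : Fin n → Y, (∏ i, P i (y i)) * (if A (fun i => y (σ i)) = σ.symm 0 then (1:ℝ) else 0))
        = ∑ z : Fin n → Y, (∏ j, P (σ j) (z j)) * (if A z = σ.symm 0 then (1:ℝ) else 0) := by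
    intro σ
    apply Fintype.sum_equiv (Equiv.arrowCongr σ.symm (Equiv.refl Y))
    intro y
    have he : (Equiv.arrowCongr σ.symm (Equiv.refl Y)) y = fun i => y (σ i) := rfl
    rw [he]
    congr 1
    exact (Equiv.prod_comp σ (fun i => P i (y i))).symm
  have key6 : ∑ S : Finset (Fin n), α ^ S.card * (1-α) ^ (n - S.card) = 1 := by
    have h := Finset.prod_add (fun _ : Fin n => α) (fun _ : Fin n => 1 - α) Finset.univ
    rw [Finset.powerset_univ] at h
    have hL : (∏ _i : Fin n, (α + (1 - α))) = 1 := by simp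
    rw [hL] at h
    calc ∑ S : Finset (Fin n), α ^ S.card * (1-α) ^ (n - S.card)
        = ∑ S : Finset (Fin n), (∏ _i ∈ S, α) * ∏ _i ∈ Finset.univ \ S, (1-α) := by
          apply Finset.sum_congr rfl
          intro S _
          rw [Finset.prod_const, Finset.prod_const,
            Finset.card_sdiff_of_subset (Finset.subset_univ S), Finset.card_univ, Fintype.card_fin]
      _ = 1 := h.symm
  have hfacc : (0:ℝ) < ((n-1).factorial : ℝ) := by
    exact_mod_cast Nat.factorial_pos (n-1)
  have hn : (0:ℝ) < (n:ℝ) := by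
    exact_mod_cast Nat.pos_of_ne_zero (NeZero.ne n)
  have main : (∑ σ : Equiv.Perm (Fin n), ∑ y : Fin n → Y,
      (∏ i, P i (y i)) * (if A (fun i => y (σ i)) = σ.symm 0 then (1:ℝ) else 0))
      ≤ M * ((n-1).factorial : ℝ) := by
    calc (∑ σ : Equiv.Perm (Fin n), ∑ y : Fin n → Y,
        (∏ i, P i (y i)) * (if A (fun i => y (σ i)) = σ.symm 0 then (1:ℝ) else 0))
        = ∑ σ : Equiv.Perm (Fin n), ∑ z : Fin n → Y,
            (∏ j, P (σ j) (z j)) * (if A z = σ.symm 0 then (1:ℝ) else 0) :=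
          Finset.sum_congr rfl fun σ _ => key1 σ
      _ ≤ ∑ σ : Equiv.Perm (Fin n),
            M * ∑ S : Finset (Fin n), (if σ.symm 0 ∈ S then stmtG n q r A S σ else 0) :=
          Finset.sum_le_sum fun σ _ =>
            stmt17_perm n P q M r hr hP0 hq0 hM hM0 A hμ_split σ
      _ = M * ∑ σ : Equiv.Perm (Fin n),
            ∑ S : Finset (Fin n), (if σ.symm 0 ∈ S then stmtG n q r A S σ else 0) := by
          rw [Finset.mul_sum]
      _ = M * ∑ S : Finset (Fin n),
            ∑ σ : Equiv.Perm (Fin n), (if σ.symm 0 ∈ S then stmtG n q r A S σ else 0) := by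
          rw [Finset.sum_comm]
      _ ≤ M * ∑ S : Finset (Fin n),
            ((n-1).factorial : ℝ) * (α ^ S.card * (1-α) ^ (n - S.card)) := by
          apply mul_le_mul_of_nonneg_left _ hM0
          exact Finset.sum_le_sum fun S _ =>
            stmt17_key5 n q r α hα0 hα1 A hμ0 hμ_sum (stmt17_count n) S
      _ = M * (((n-1).factorial : ℝ)
            * ∑ S : Finset (Fin n), α ^ S.card * (1-α) ^ (n - S.card)) := by
          rw [← Finset.mul_sum]
      _ = M * ((n-1).factorial : ℝ) := by rw [key6, mul_one]
  show (Nat.factorial n : ℝ)⁻¹ *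
      (∑ σ : Equiv.Perm (Fin n), ∑ y : Fin n → Y,
        (∏ i, P i (y i)) * (if A (fun i => y (σ i)) = σ.symm 0 then (1:ℝ) else 0)) ≤ M / n
  have hfc : (Nat.factorial n : ℝ) = (n:ℝ) * ((n-1).factorial : ℝ) := by
    have : n.factorial = n * (n-1).factorial := by
      obtain ⟨m, rfl⟩ : ∃ m, n = m + 1 :=
        ⟨n - 1, by have h := Nat.pos_of_ne_zero (NeZero.ne n); omega⟩
      simp [Nat.factorial_succ]
    exact_mod_cast this
  calc (Nat.factorial n : ℝ)⁻¹ *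
      (∑ σ : Equiv.Perm (Fin n), ∑ y : Fin n → Y,
        (∏ i, P i (y i)) * (if A (fun i => y (σ i)) = σ.symm 0 then (1:ℝ) else 0))
      ≤ (Nat.factorial n : ℝ)⁻¹ * (M * ((n-1).factorial : ℝ)) := by
        apply mul_le_mul_of_nonneg_left main
        positivity
    _ = M / n := by
        rw [hfc]
        field_simp

theorem stmt17 {X Y : Type*} [Fintype X] [Fintype Y] [Nonempty X] [Nonempty Y]
    (R : X → Y → ℝ)
    (hR0 : ∀ x y, 0 ≤ R x y) (hR1 : ∀ x, ∑ y, R x y = 1)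
    (x₁ : X)
    (hpos : ∀ y, 0 < Finset.univ.inf' Finset.univ_nonempty (fun x => R x y))
    (n : ℕ) [NeZero n] (x : Fin n → X) (hx1 : x 0 = x₁)
    (A : (Fin n → Y) → Fin n) :
    shuffleSuccess n (fun i => R (x i)) A ≤
      (Finset.univ.sup' Finset.univ_nonempty
        (fun y => R x₁ y / Finset.univ.inf' Finset.univ_nonempty (fun x => R x y))) / n := by
  classical
  obtain ⟨y0⟩ := (inferInstance : Nonempty Y)
  have hM' : ∀ y : Y, R (x 0) y ≤
      (Finset.univ.sup' Finset.univ_nonempty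
        (fun y => R x₁ y / Finset.univ.inf' Finset.univ_nonempty (fun x => R x y)))
        * (Finset.univ.inf' Finset.univ_nonempty (fun x => R x y)) := by
    intro y
    rw [hx1]
    exact (div_le_iff₀ (hpos y)).mp (Finset.le_sup'
      (fun y => R x₁ y / Finset.univ.inf' Finset.univ_nonempty (fun x => R x y))
      (Finset.mem_univ y))
  have hM0' : (0:ℝ) ≤ Finset.univ.sup' Finset.univ_nonempty
      (fun y => R x₁ y / Finset.univ.inf' Finset.univ_nonempty (fun x => R x y)) :=
    le_trans (div_nonneg (hR0 x₁ y0) (hpos y0).le)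
      (Finset.le_sup'
        (fun y => R x₁ y / Finset.univ.inf' Finset.univ_nonempty (fun x => R x y))
        (Finset.mem_univ y0))
  exact stmt17_aux n (fun i => R (x i))
    (fun y => Finset.univ.inf' Finset.univ_nonempty (fun x => R x y))
    (Finset.univ.sup' Finset.univ_nonempty
      (fun y => R x₁ y / Finset.univ.inf' Finset.univ_nonempty (fun x => R x y)))
    (fun i y => hR0 _ _) (fun i => hR1 (x i))
    (fun y => (hpos y).le)
    (fun i y => Finset.inf'_le _ (Finset.mem_univ (x i)))
    hM' hM0' A
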